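/- Let ρ1 ∈ D_{n1} and ρ2 ∈ D_{n2} be density matrices. Then there exist an integer k ≤ max{rank(ρ1), rank(ρ2)} and positive semidefinite matrices C_1,...,C_k ∈ M_{n1}(ℂ) and C̃_1,...,C̃_k ∈ M_{n2}(ℂ) such that: for each i, C_i and C̃_i have the same nonzero eigenvalues counting multiplicities; ρ1 = C_1 + ... + C_k; and ρ2 = C̃_1 + ... + C̃_k. -/

import Mathlib

open Matrix Finset
open scoped ComplexOrder

namespace Stmt7Aux
open Polynomial

lemma charpoly_diagonal {n : ℕ} (d : Fin n → ℂ) :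
    (Matrix.diagonal d).charpoly = ∏ i, (X - C (d i)) := by
  have h : charmatrix (Matrix.diagonal d) = Matrix.diagonal (fun i => (X : ℂ[X]) - C (d i)) := by
    ext i j
    by_cases h : i = j
    · subst h; simp
    · simp [charmatrix_apply_ne _ _ _ h, Matrix.diagonal_apply_ne _ h, Matrix.diagonal_apply_ne d h]
  rw [Matrix.charpoly, h, Matrix.det_diagonal]

lemma charpoly_unitary_conj {n : ℕ} (U : Matrix (Fin n) (Fin n) ℂ)
    (hU : U ∈ Matrix.unitaryGroup (Fin n) ℂ) (A : Matrix (Fin n) (Fin n) ℂ) :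
    (U * A * star U).charpoly = A.charpoly := by
  have hUU : U * star U = 1 := (Matrix.mem_unitaryGroup_iff).mp hU
  let mC : Matrix (Fin n) (Fin n) ℂ →+* Matrix (Fin n) (Fin n) ℂ[X] :=
    (C : ℂ →+* ℂ[X]).mapMatrix
  have hmul : mC U * mC (star U) = 1 := by rw [← _root_.map_mul, hUU, _root_.map_one]
  have key : charmatrix (U * A * star U) = mC U * charmatrix A * mC (star U) := by
    simp only [charmatrix, mul_sub, sub_mul]
    congr 1
    · rw [mul_assoc, (Matrix.scalar_commute (X : ℂ[X]) (Commute.all _) (mC (star U))).eq,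
        ← mul_assoc, hmul, one_mul]
    · rw [_root_.map_mul, _root_.map_mul]
  rw [Matrix.charpoly, Matrix.charpoly, key, Matrix.det_mul, Matrix.det_mul]
  have hdet : (mC U).det * (mC (star U)).det = 1 := by
    rw [← Matrix.det_mul, hmul, Matrix.det_one]
  rw [mul_right_comm, hdet, one_mul]

lemma prod_roots {n : ℕ} (a : Fin n → ℂ) :
    (∏ i, (X - C (a i))).roots = Finset.univ.val.map a := by
  rw [Finset.prod_eq_multiset_prod]
  rw [show Multiset.map (fun i => X - C (a i)) Finset.univ.val
      = Multiset.map (fun z => X - C z) (Finset.univ.val.map a) by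
    rw [Multiset.map_map]; rfl]
  exact Polynomial.roots_multiset_prod_X_sub_C _

lemma eig_multiset {n : ℕ} {B : Matrix (Fin n) (Fin n) ℂ} (hB : B.IsHermitian)
    (U : Matrix (Fin n) (Fin n) ℂ) (hU : U ∈ Matrix.unitaryGroup (Fin n) ℂ) (d : Fin n → ℝ)
    (h : B = U * Matrix.diagonal ((RCLike.ofReal : ℝ → ℂ) ∘ d) * star U) :
    Finset.univ.val.map hB.eigenvalues = Finset.univ.val.map d := by
  have h1 : B.charpoly = ∏ i, (X - C ((d i : ℝ) : ℂ)) := by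
    rw [h, charpoly_unitary_conj U hU, charpoly_diagonal]
    exact Finset.prod_congr rfl fun i _ => rfl
  have h2 : B.charpoly = ∏ i, (X - C ((hB.eigenvalues i : ℝ) : ℂ)) := by
    conv_lhs => rw [hB.spectral_theorem, Unitary.conjStarAlgAut_apply]
    rw [charpoly_unitary_conj _ (hB.eigenvectorUnitary).2, charpoly_diagonal]
    exact Finset.prod_congr rfl fun i _ => rfl
  have h3 : Finset.univ.val.map (fun i => ((hB.eigenvalues i : ℝ) : ℂ))
      = Finset.univ.val.map (fun i => ((d i : ℝ) : ℂ)) := by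
    rw [← prod_roots, ← prod_roots, ← h1, ← h2]
  have h4 : Multiset.map (fun x : ℝ => (x : ℂ)) (Finset.univ.val.map hB.eigenvalues)
      = Multiset.map (fun x : ℝ => (x : ℂ)) (Finset.univ.val.map d) := by
    rw [Multiset.map_map, Multiset.map_map]
    exact h3
  exact Multiset.map_injective (fun x y hxy => by exact_mod_cast hxy) h4


lemma filt_aux {a r : ℕ} (hra : r ≤ a) (u : Fin a → ℝ) (hu : ∀ i, u i ≠ 0 → (i : ℕ) < r) :
    Multiset.filter (fun x => x ≠ 0) (Finset.univ.val.map u)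
      = Multiset.filter (fun x => x ≠ 0)
        ((Finset.range r).val.map (fun x => if h : x < a then u ⟨x, h⟩ else 0)) := by
  set U : ℕ → ℝ := fun x => if h : x < a then u ⟨x, h⟩ else 0 with hU
  have h1 : Finset.univ.val.map u = (Finset.range a).val.map U := by
    have : (Finset.range a).val = Finset.univ.val.map (Fin.val : Fin a → ℕ) := by
      rw [Finset.range_val, Fin.univ_def]
      show Multiset.range a = Multiset.map Fin.val (List.finRange a : Multiset (Fin a))
      rw [Multiset.map_coe, List.map_coe_finRange_eq_range]
      rfl
    rw [this, Multiset.map_map]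
    apply Multiset.map_congr rfl
    intro x _
    simp only [Function.comp_apply, hU, dif_pos x.isLt, Fin.eta]
  rw [h1]
  have hsub : (Finset.range r) ⊆ (Finset.range a) := Finset.range_subset_range.2 hra
  obtain ⟨z, hz⟩ := Multiset.le_iff_exists_add.mp (Finset.val_le_iff.mpr hsub)
  rw [hz, Multiset.map_add, Multiset.filter_add]
  have hzero : Multiset.filter (fun x => x ≠ 0) (z.map U) = 0 := by
    rw [Multiset.filter_eq_nil]
    intro x hx
    simp only [ne_eq, not_not]
    obtain ⟨y, hy, rfl⟩ := Multiset.mem_map.mp hx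
    have hyr : ¬ y < r := by
      intro hlt
      have hcount : Multiset.count y ((Finset.range r).val + z)
          = Multiset.count y (Finset.range a).val := by rw [hz]
      rw [Multiset.count_add] at hcount
      have c1 : Multiset.count y (Finset.range r).val = 1 :=
        Multiset.count_eq_one_of_mem (Finset.range r).nodup (Finset.mem_range.mpr hlt)
      have c2 : Multiset.count y (Finset.range a).val = 1 :=
        Multiset.count_eq_one_of_mem (Finset.range a).nodup
          (Finset.mem_range.mpr (lt_of_lt_of_le hlt hra))
      have hyz : Multiset.count y z = 0 := by omega
      rw [← Multiset.count_pos, hyz] at hy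
      exact lt_irrefl 0 hy
    simp only [hU]
    split_ifs with h
    · by_contra hne
      exact hyr (hu ⟨y, h⟩ hne)
    · rfl
  rw [hzero, add_zero]

lemma filt {a b r : ℕ} (hra : r ≤ a) (hrb : r ≤ b) (u : Fin a → ℝ) (v : Fin b → ℝ)
    (hu : ∀ i, u i ≠ 0 → (i : ℕ) < r) (hv : ∀ t, v t ≠ 0 → (t : ℕ) < r)
    (huv : ∀ (x : ℕ) (hxa : x < a) (hxb : x < b), u ⟨x, hxa⟩ = v ⟨x, hxb⟩) :
    Multiset.filter (fun x => x ≠ 0) (Finset.univ.val.map u)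
      = Multiset.filter (fun x => x ≠ 0) (Finset.univ.val.map v) := by
  rw [filt_aux hra u hu, filt_aux hrb v hv]
  congr 1
  apply Multiset.map_congr rfl
  intro x hx
  have hxr : x < r := Finset.mem_range.mp hx
  rw [dif_pos (lt_of_lt_of_le hxr hra), dif_pos (lt_of_lt_of_le hxr hrb)]
  exact huv x _ _

lemma clamp_sum' (M : ℕ → ℝ) (mono : Monotone M) (h0 : M 0 = 0) {a b : ℝ}
    (ha : 0 ≤ a) (hab : a ≤ b) (k : ℕ) (hk : b ≤ M k) :
    ∑ j ∈ Finset.range k, max 0 (min b (M (j+1)) - max a (M j)) = b - a := by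
  have key : ∀ j, max 0 (min b (M (j+1)) - max a (M j))
      = min b (max a (M (j+1))) - min b (max a (M j)) := by
    intro j
    have h := mono (Nat.le_succ j)
    simp only [max_def, min_def]
    split_ifs <;> linarith
  simp_rw [key]
  rw [Finset.sum_range_sub (fun j => min b (max a (M j)))]
  have h1 : min b (max a (M k)) = b := by
    have : b ≤ max a (M k) := le_trans hk (le_max_right _ _)
    simp [min_eq_left, this]
  have h2 : min b (max a (M 0)) = a := by
    rw [h0]; simp [max_eq_left ha, min_eq_right hab]
  rw [h1, h2]

lemma mapperm {k : ℕ} (e : Equiv.Perm (Fin k)) (h : Fin k → ℝ) :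
    Finset.univ.val.map (fun t => h (e t)) = Finset.univ.val.map h := by
  have he : Finset.univ.val.map e = Finset.univ.val := by
    conv_rhs => rw [← Finset.map_univ_equiv e]
    rw [Finset.map_val]
    rfl
  conv_rhs => rw [← he]
  rw [Multiset.map_map]
  rfl

open Fin.NatCast in
lemma combo {n1 n2 r1 r2 : ℕ} (hr1 : r1 ≤ n1) (hr2 : r2 ≤ n2)
    (f : Fin n1 → ℝ) (g : Fin n2 → ℝ)
    (hf : ∀ i, 0 ≤ f i) (hg : ∀ j, 0 ≤ g j)
    (hsum : ∑ i, f i = ∑ j, g j)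
    (hf0 : ∀ i : Fin n1, f i ≠ 0 → (i : ℕ) < r1)
    (hg0 : ∀ j : Fin n2, g j ≠ 0 → (j : ℕ) < r2) :
    ∃ (A : Fin (max r1 r2) → Fin n1 → ℝ) (B : Fin (max r1 r2) → Fin n2 → ℝ),
      (∀ c i, 0 ≤ A c i) ∧ (∀ c j, 0 ≤ B c j) ∧
      (∀ i, ∑ c, A c i = f i) ∧ (∀ j, ∑ c, B c j = g j) ∧
      (∀ c, Multiset.filter (fun x => x ≠ 0) (Finset.univ.val.map (A c)) =
            Multiset.filter (fun x => x ≠ 0) (Finset.univ.val.map (B c))) := by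
  set k := max r1 r2 with hk
  have hr1k : r1 ≤ k := le_max_left _ _
  have hr2k : r2 ≤ k := le_max_right _ _
  rcases Nat.eq_zero_or_pos k with hk0 | hk0
  · have hfz : ∀ i, f i = 0 := by
      intro i; by_contra hne; have := hf0 i hne; omega
    have hgz : ∀ j, g j = 0 := by
      intro j; by_contra hne; have := hg0 j hne; omega
    refine ⟨fun _ _ => 0, fun _ _ => 0, fun _ _ => le_refl _, fun _ _ => le_refl _,
      fun i => by rw [Finset.sum_const_zero, hfz i],
      fun j => by rw [Finset.sum_const_zero, hgz j],
      fun c => by rw [hk0] at c; exact c.elim0⟩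
  haveI : NeZero k := ⟨hk0.ne'⟩
  -- cumulative sums
  set F : ℕ → ℝ := fun i => if h : i < n1 then f ⟨i, h⟩ else 0 with hF
  set G : ℕ → ℝ := fun j => if h : j < n2 then g ⟨j, h⟩ else 0 with hG
  set L : ℕ → ℝ := fun t => ∑ i ∈ Finset.range t, F i with hL
  set M : ℕ → ℝ := fun t => ∑ j ∈ Finset.range t, G j with hM
  set T : ℝ := ∑ i, f i with hT
  have hFnn : ∀ i, 0 ≤ F i := by
    intro i; rw [hF]; dsimp only; split_ifs; exacts [hf _, le_refl _]
  have hGnn : ∀ j, 0 ≤ G j := by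
    intro j; rw [hG]; dsimp only; split_ifs; exacts [hg _, le_refl _]
  have hF0 : ∀ i, r1 ≤ i → F i = 0 := by
    intro i hi; rw [hF]; dsimp only; split_ifs with h
    · by_contra hne; have := hf0 ⟨i, h⟩ hne; simp at this; omega
    · rfl
  have hG0 : ∀ j, r2 ≤ j → G j = 0 := by
    intro j hj; rw [hG]; dsimp only; split_ifs with h
    · by_contra hne; have := hg0 ⟨j, h⟩ hne; simp at this; omega
    · rfl
  have hLmono : Monotone L := by
    apply monotone_nat_of_le_succ
    intro t; rw [hL]; dsimp only; rw [Finset.sum_range_succ]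
    linarith [hFnn t]
  have hMmono : Monotone M := by
    apply monotone_nat_of_le_succ
    intro t; rw [hM]; dsimp only; rw [Finset.sum_range_succ]
    linarith [hGnn t]
  have hL0 : L 0 = 0 := by simp [hL]
  have hM0 : M 0 = 0 := by simp [hM]
  have hLsucc : ∀ t, L (t+1) = L t + F t := fun t => Finset.sum_range_succ F t
  have hMsucc : ∀ t, M (t+1) = M t + G t := fun t => Finset.sum_range_succ G t
  have hLn1 : L n1 = T := by
    rw [hT, hL]; dsimp only
    rw [← Fin.sum_univ_eq_sum_range]
    exact Finset.sum_congr rfl fun i _ => by simp [hF]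
  have hMn2 : M n2 = T := by
    rw [hsum, hM]; dsimp only
    rw [← Fin.sum_univ_eq_sum_range]
    exact Finset.sum_congr rfl fun j _ => by simp [hG]
  have hLconst : ∀ s t, r1 ≤ s → s ≤ t → L s = L t := by
    intro s t hs hst
    rw [hL]; dsimp only
    refine Finset.sum_subset (Finset.range_subset_range.2 hst) ?_
    intro x hx hxs
    simp only [Finset.mem_range] at hx hxs
    exact hF0 x (by omega)
  have hMconst : ∀ s t, r2 ≤ s → s ≤ t → M s = M t := by
    intro s t hs hst
    rw [hM]; dsimp only
    refine Finset.sum_subset (Finset.range_subset_range.2 hst) ?_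
    intro x hx hxs
    simp only [Finset.mem_range] at hx hxs
    exact hG0 x (by omega)
  have hLT : ∀ t, r1 ≤ t → L t = T := by
    intro t ht
    rcases le_total t n1 with h | h
    · rw [hLconst t n1 ht h, hLn1]
    · rw [← hLconst n1 t hr1 h, hLn1]
  have hMT : ∀ t, r2 ≤ t → M t = T := by
    intro t ht
    rcases le_total t n2 with h | h
    · rw [hMconst t n2 ht h, hMn2]
    · rw [← hMconst n2 t hr2 h, hMn2]
  have hLnn : ∀ t, 0 ≤ L t := fun t => Finset.sum_nonneg fun i _ => hFnn i
  have hMnn : ∀ t, 0 ≤ M t := fun t => Finset.sum_nonneg fun j _ => hGnn j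
  have hLleT : ∀ t, L t ≤ T := by
    intro t
    rcases le_total t n1 with h | h
    · rw [← hLn1]; exact hLmono h
    · rw [hLT t (le_trans hr1 h)]
  have hMleT : ∀ t, M t ≤ T := by
    intro t
    rcases le_total t n2 with h | h
    · rw [← hMn2]; exact hMmono h
    · rw [hMT t (le_trans hr2 h)]
  -- the atoms
  set m : ℕ → ℕ → ℝ := fun i j => max 0 (min (L (i+1)) (M (j+1)) - max (L i) (M j)) with hm
  have hmnn : ∀ i j, 0 ≤ m i j := fun i j => le_max_left _ _
  have hrowA : ∀ i, ∑ j ∈ Finset.range k, m i j = F i := by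
    intro i
    have key := clamp_sum' M hMmono hM0 (hLnn i)
      (by rw [hLsucc]; linarith [hFnn i]) k (le_trans (hLleT (i+1)) (hMT k hr2k).symm.le)
    rw [hm]; dsimp only
    rw [key, hLsucc]; ring
  have hrowB : ∀ j, ∑ i ∈ Finset.range k, m i j = G j := by
    intro j
    have hcomm : ∀ i, m i j = max 0 (min (M (j+1)) (L (i+1)) - max (M j) (L i)) := by
      intro i; rw [hm]; dsimp only; rw [min_comm, max_comm (L i) (M j)]
    simp_rw [hcomm]
    have key := clamp_sum' L hLmono hL0 (hMnn j)
      (by rw [hMsucc]; linarith [hGnn j]) k (le_trans (hMleT (j+1)) (hLT k hr1k).symm.le)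
    rw [key, hMsucc]; ring
  have hm1 : ∀ i j, m i j ≠ 0 → i < r1 := by
    intro i j hne
    by_contra h
    apply hne
    have h1 : L (i+1) = L i := by rw [hLT _ (by omega), hLT _ (by omega)]
    rw [hm]; dsimp only
    apply max_eq_left
    have h2 := min_le_left (L (i+1)) (M (j+1))
    have h3 := le_max_left (L i) (M j)
    linarith
  have hm2 : ∀ i j, m i j ≠ 0 → j < r2 := by
    intro i j hne
    by_contra h
    apply hne
    have h1 : M (j+1) = M j := by rw [hMT _ (by omega), hMT _ (by omega)]
    rw [hm]; dsimp only
    apply max_eq_left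
    have h2 := min_le_right (L (i+1)) (M (j+1))
    have h3 := le_max_right (L i) (M j)
    linarith
  -- the decomposition
  refine ⟨fun c i => m i ((c - (((i : ℕ)) : Fin k)) : Fin k).val,
          fun c j => m ((c - (((j : ℕ)) : Fin k)) : Fin k).val j,
          fun c i => hmnn _ _, fun c j => hmnn _ _, ?_, ?_, ?_⟩
  · intro i
    dsimp only
    have step : ∑ c : Fin k, m i ((c - (((i : ℕ)) : Fin k)) : Fin k).val
        = ∑ t : Fin k, m i t.val :=
      Fintype.sum_equiv (Equiv.subRight (((i : ℕ)) : Fin k)) _ _ (fun c => rfl)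
    rw [step, Fin.sum_univ_eq_sum_range (fun t => m i t) k, hrowA]
    simp [hF]
  · intro j
    dsimp only
    have step : ∑ c : Fin k, m ((c - (((j : ℕ)) : Fin k)) : Fin k).val j
        = ∑ t : Fin k, m t.val j :=
      Fintype.sum_equiv (Equiv.subRight (((j : ℕ)) : Fin k)) _ _ (fun c => rfl)
    rw [step, Fin.sum_univ_eq_sum_range (fun t => m t j) k, hrowB]
    simp [hG]
  · intro c
    dsimp only
    set w : Fin k → ℝ := fun t => m t.val ((c - t) : Fin k).val with hw
    set w2 : Fin k → ℝ := fun t => m ((c - t) : Fin k).val t.val with hw2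
    have stepA : Multiset.filter (fun x => x ≠ 0)
        (Finset.univ.val.map (fun i : Fin n1 => m i ((c - (((i : ℕ)) : Fin k)) : Fin k).val))
        = Multiset.filter (fun x => x ≠ 0) (Finset.univ.val.map w) := by
      apply filt hr1 hr1k
      · intro i hne
        exact hm1 _ _ hne
      · intro t hne
        exact hm1 _ _ (by rw [hw] at hne; exact hne)
      · intro x hxa hxk
        rw [hw]
        dsimp only
        congr 2
        have hxx : (⟨x, hxk⟩ : Fin k) = ((x : ℕ) : Fin k) :=
          Fin.ext (by rw [Fin.val_cast_of_lt hxk])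
        rw [hxx]
    have stepP : Finset.univ.val.map w = Finset.univ.val.map w2 := by
      have := mapperm (Equiv.subLeft c) w
      rw [← this]
      apply Multiset.map_congr rfl
      intro t _
      rw [hw2, hw]
      dsimp only [Equiv.subLeft_apply]
      rw [show (Equiv.subLeft c) t = c - t from rfl, sub_sub_cancel]
    have stepB : Multiset.filter (fun x => x ≠ 0) (Finset.univ.val.map w2)
        = Multiset.filter (fun x => x ≠ 0)
          (Finset.univ.val.map (fun j : Fin n2 => m ((c - (((j : ℕ)) : Fin k)) : Fin k).val j)) := by
      apply filt hr2k hr2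
      · intro t hne
        exact hm2 _ _ (by rw [hw2] at hne; exact hne)
      · intro j hne
        exact hm2 _ _ hne
      · intro x hxk hxa
        rw [hw2]
        dsimp only
        congr 2
        have hxx : (⟨x, hxk⟩ : Fin k) = ((x : ℕ) : Fin k) :=
          Fin.ext (by rw [Fin.val_cast_of_lt hxk])
        rw [hxx]
    rw [stepA, stepP, stepB]


lemma exists_perm {n r : ℕ} (v : Fin n → ℝ) (hcard : Fintype.card {i // v i ≠ 0} = r)
    (hrn : r ≤ n) :
    ∃ σ : Equiv.Perm (Fin n), ∀ x : Fin n, v (σ x) ≠ 0 → (x : ℕ) < r := by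
  classical
  have hc2 : Fintype.card {x : Fin n // (x : ℕ) < r} = r := by
    rw [Fintype.card_congr (⟨fun x => (⟨x.1.1, x.2⟩ : Fin r),
      fun y => ⟨⟨y.1, lt_of_lt_of_le y.2 hrn⟩, y.2⟩,
      fun x => by ext; rfl, fun y => by ext; rfl⟩ :
        {x : Fin n // (x : ℕ) < r} ≃ Fin r)]
    exact Fintype.card_fin r
  let e : {x : Fin n // (x : ℕ) < r} ≃ {i // v i ≠ 0} :=
    Fintype.equivOfCardEq (hc2.trans hcard.symm)
  refine ⟨e.extendSubtype, fun x hx => ?_⟩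
  by_contra h
  exact (e.extendSubtype_not_mem x h) hx

lemma diag_sum' {n k : ℕ} (d : Fin k → Fin n → ℂ) :
    ∑ c, Matrix.diagonal (d c) = Matrix.diagonal (fun i => ∑ c, d c i) := by
  ext i j
  by_cases h : i = j
  · subst h; simp [Matrix.sum_apply]
  · simp [Matrix.sum_apply, Matrix.diagonal_apply_ne _ h]

lemma trace_one {n : ℕ} {ρ : Matrix (Fin n) (Fin n) ℂ} (hρ : ρ.PosSemidef)
    (htr : ρ.trace = 1) : ∑ i, hρ.1.eigenvalues i = 1 := by
  have h1 := hρ.1.spectral_theorem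
  have hUmem := hρ.1.eigenvectorUnitary.2
  have htr2 : ρ.trace = (Matrix.diagonal ((RCLike.ofReal : ℝ → ℂ) ∘ hρ.1.eigenvalues)).trace := by
    conv_lhs => rw [h1, Unitary.conjStarAlgAut_apply]
    rw [Matrix.trace_mul_cycle,
      Matrix.mem_unitaryGroup_iff'.mp hρ.1.eigenvectorUnitary.2, Matrix.one_mul]
  rw [htr, Matrix.trace_diagonal] at htr2
  have h3 : ((∑ i, hρ.1.eigenvalues i : ℝ) : ℂ) = ((1 : ℝ) : ℂ) := by
    push_cast
    rw [htr2]
    rfl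
  exact_mod_cast h3

end Stmt7Aux

open Stmt7Aux

/-- Any pair of density matrices can be simultaneously decomposed as sums of at most
`max{rank ρ1, rank ρ2}` pairwise isospectral positive semidefinite matrices. -/
theorem stmt7 {n1 n2 : ℕ}
    (ρ1 : Matrix (Fin n1) (Fin n1) ℂ) (ρ2 : Matrix (Fin n2) (Fin n2) ℂ)
    (hρ1 : ρ1.PosSemidef) (hρ1tr : ρ1.trace = 1)
    (hρ2 : ρ2.PosSemidef) (hρ2tr : ρ2.trace = 1) :
    ∃ k : ℕ, k ≤ max ρ1.rank ρ2.rank ∧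
      ∃ (C : Fin k → Matrix (Fin n1) (Fin n1) ℂ)
        (C' : Fin k → Matrix (Fin n2) (Fin n2) ℂ)
        (hC : ∀ i, (C i).PosSemidef) (hC' : ∀ i, (C' i).PosSemidef),
        (∀ i, Multiset.filter (fun x => x ≠ 0)
            (Finset.univ.val.map (hC i).1.eigenvalues) =
          Multiset.filter (fun x => x ≠ 0)
            (Finset.univ.val.map (hC' i).1.eigenvalues)) ∧
        ρ1 = ∑ i, C i ∧ ρ2 = ∑ i, C' i := by
  classical
  have h1 : ρ1.IsHermitian := hρ1.1
  have h2 : ρ2.IsHermitian := hρ2.1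
  set r1 := ρ1.rank with hr1def
  set r2 := ρ2.rank with hr2def
  have hr1n : r1 ≤ n1 := ρ1.rank_le_width
  have hr2n : r2 ≤ n2 := ρ2.rank_le_width
  have hcard1 : Fintype.card {i // h1.eigenvalues i ≠ 0} = r1 :=
    h1.rank_eq_card_non_zero_eigs.symm
  have hcard2 : Fintype.card {i // h2.eigenvalues i ≠ 0} = r2 :=
    h2.rank_eq_card_non_zero_eigs.symm
  obtain ⟨σ1, hσ1⟩ := exists_perm h1.eigenvalues hcard1 hr1n
  obtain ⟨σ2, hσ2⟩ := exists_perm h2.eigenvalues hcard2 hr2n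
  set f : Fin n1 → ℝ := fun x => h1.eigenvalues (σ1 x) with hfdef
  set g : Fin n2 → ℝ := fun x => h2.eigenvalues (σ2 x) with hgdef
  have hf : ∀ i, 0 ≤ f i := fun i => hρ1.eigenvalues_nonneg _
  have hg : ∀ j, 0 ≤ g j := fun j => hρ2.eigenvalues_nonneg _
  have hsum : ∑ i, f i = ∑ j, g j := by
    rw [hfdef, hgdef]
    rw [Equiv.sum_comp σ1 h1.eigenvalues, Equiv.sum_comp σ2 h2.eigenvalues,
      trace_one hρ1 hρ1tr, trace_one hρ2 hρ2tr]
  obtain ⟨A, B, hAnn, hBnn, hAcol, hBcol, hABfilt⟩ :=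
    combo hr1n hr2n f g hf hg hsum hσ1 hσ2
  set Uc1 : Matrix (Fin n1) (Fin n1) ℂ := (h1.eigenvectorUnitary : Matrix (Fin n1) (Fin n1) ℂ)
    with hU1def
  set Uc2 : Matrix (Fin n2) (Fin n2) ℂ := (h2.eigenvectorUnitary : Matrix (Fin n2) (Fin n2) ℂ)
    with hU2def
  set C : Fin (max r1 r2) → Matrix (Fin n1) (Fin n1) ℂ := fun c =>
    Uc1 * Matrix.diagonal ((RCLike.ofReal : ℝ → ℂ) ∘ fun i => A c (σ1.symm i)) * star Uc1
    with hCdef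
  set C' : Fin (max r1 r2) → Matrix (Fin n2) (Fin n2) ℂ := fun c =>
    Uc2 * Matrix.diagonal ((RCLike.ofReal : ℝ → ℂ) ∘ fun j => B c (σ2.symm j)) * star Uc2
    with hC'def
  have hC : ∀ c, (C c).PosSemidef := by
    intro c
    have hd : (Matrix.diagonal ((RCLike.ofReal : ℝ → ℂ) ∘ fun i => A c (σ1.symm i))).PosSemidef :=
      Matrix.posSemidef_diagonal_iff.mpr fun i => RCLike.ofReal_nonneg.mpr (hAnn c _)
    rw [hCdef]
    dsimp only
    rw [Matrix.star_eq_conjTranspose]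
    exact hd.mul_mul_conjTranspose_same Uc1
  have hC' : ∀ c, (C' c).PosSemidef := by
    intro c
    have hd : (Matrix.diagonal ((RCLike.ofReal : ℝ → ℂ) ∘ fun j => B c (σ2.symm j))).PosSemidef :=
      Matrix.posSemidef_diagonal_iff.mpr fun j => RCLike.ofReal_nonneg.mpr (hBnn c _)
    rw [hC'def]
    dsimp only
    rw [Matrix.star_eq_conjTranspose]
    exact hd.mul_mul_conjTranspose_same Uc2
  refine ⟨max r1 r2, le_refl _, C, C', hC, hC', ?_, ?_, ?_⟩
  · intro c
    have m1 : Finset.univ.val.map (hC c).1.eigenvalues = Finset.univ.val.map (A c) := by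
      rw [eig_multiset (hC c).1 Uc1 h1.eigenvectorUnitary.2 (fun i => A c (σ1.symm i)) rfl]
      have := mapperm σ1.symm (A c)
      simpa using this
    have m2 : Finset.univ.val.map (hC' c).1.eigenvalues = Finset.univ.val.map (B c) := by
      rw [eig_multiset (hC' c).1 Uc2 h2.eigenvectorUnitary.2 (fun j => B c (σ2.symm j)) rfl]
      have := mapperm σ2.symm (B c)
      simpa using this
    rw [m1, m2]
    exact hABfilt c
  · have hsum1 : ∑ c, C c
        = Uc1 * Matrix.diagonal ((RCLike.ofReal : ℝ → ℂ) ∘ h1.eigenvalues) * star Uc1 := by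
      rw [hCdef]
      rw [← Finset.sum_mul, ← Finset.mul_sum, diag_sum']
      have hdiag : (fun i => ∑ c : Fin (max r1 r2),
          ((RCLike.ofReal : ℝ → ℂ) ∘ fun i => A c (σ1.symm i)) i)
          = ((RCLike.ofReal : ℝ → ℂ) ∘ h1.eigenvalues) := by
        funext i
        simp only [Function.comp_apply]
        rw [← RCLike.ofReal_sum]
        congr 1
        rw [hAcol, hfdef]
        dsimp only
        rw [Equiv.apply_symm_apply]
      rw [hdiag]
    rw [hsum1]
    exact h1.spectral_theorem
  · have hsum2 : ∑ c, C' c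
        = Uc2 * Matrix.diagonal ((RCLike.ofReal : ℝ → ℂ) ∘ h2.eigenvalues) * star Uc2 := by
      rw [hC'def]
      rw [← Finset.sum_mul, ← Finset.mul_sum, diag_sum']
      have hdiag : (fun j => ∑ c : Fin (max r1 r2),
          ((RCLike.ofReal : ℝ → ℂ) ∘ fun j => B c (σ2.symm j)) j)
          = ((RCLike.ofReal : ℝ → ℂ) ∘ h2.eigenvalues) := by
        funext j
        simp only [Function.comp_apply]
        rw [← RCLike.ofReal_sum]
        congr 1
        rw [hBcol, hgdef]
        dsimp only
        rw [Equiv.apply_symm_apply]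
      rw [hdiag]
    rw [hsum2]
    exact h2.spectral_theorem
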